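/- For all real numbers a > 0 and b > 1 and every natural number k ≥ 1, one has |R_{ab}(k)/k - c_{ab}(k)| ≤ (k/2) ∑_{n=1}^∞ n^{-(2a+b)} exp(-k/n^a) + (k/2) ∑_{n=1}^∞ n^{-(3a+b)} exp(-k/n^a). -/

import Mathlib

open ArithmeticFunction

lemma key_poly {t : ℝ} (h0 : 0 ≤ t) (h1 : t ≤ 1) :
    Real.exp (-t) * (1 - (t^2 + t^3)/2) ≤ 1 - t := by
  have hs := Real.sum_le_exp_of_nonneg h0 5
  simp [Finset.sum_range_succ, Nat.factorial] at hs
  rw [Real.exp_neg, inv_mul_le_iff₀ (Real.exp_pos t)]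
  have h2 : (1-t) * (1 + t + t^2/2 + t^3/6 + t^4/24) ≤ (1-t) * Real.exp t :=
    mul_le_mul_of_nonneg_left (by linarith) (by linarith)
  have h3 : 0 ≤ t^3*(1-t)*(t+4) :=
    mul_nonneg (mul_nonneg (pow_nonneg h0 3) (by linarith)) (by linarith)
  nlinarith [h2, h3]

lemma key_pt {t : ℝ} (h0 : 0 < t) (h1 : t ≤ 1) (k : ℕ) :
    |Real.exp (-((k : ℝ) * t)) - (1 - t)^k| ≤
      ((k : ℝ)/2) * (t^2 + t^3) * Real.exp (-((k : ℝ) * t)) := by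
  set E := Real.exp (-((k : ℝ) * t)) with hE
  set s := (t^2 + t^3)/2 with hs
  have hs0 : 0 ≤ s := by rw [hs]; positivity
  have hs1 : s ≤ 1 := by
    have h2 : t^2 ≤ 1 := pow_le_one₀ h0.le h1
    have h3 : t^3 ≤ 1 := pow_le_one₀ h0.le h1
    rw [hs]; linarith
  have hexpk : (Real.exp (-t))^k = E := by
    rw [hE, ← Real.exp_nat_mul]; ring_nf
  have hub : (1 - t)^k ≤ E := by
    have h := Real.add_one_le_exp (-t)
    calc (1-t)^k ≤ (Real.exp (-t))^k := pow_le_pow_left₀ (by linarith) (by linarith) k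
      _ = E := hexpk
  have hlb : E * (1 - (k : ℝ)*s) ≤ (1-t)^k := by
    have hb : 1 - (k : ℝ)*s ≤ (1-s)^k := by
      have := one_add_mul_le_pow (a := -s) (by linarith) k
      simpa [sub_eq_add_neg, mul_comm] using this
    calc E * (1 - (k : ℝ)*s) ≤ E * (1-s)^k :=
          mul_le_mul_of_nonneg_left hb (Real.exp_nonneg _)
      _ = (Real.exp (-t) * (1-s))^k := by rw [mul_pow, hexpk]
      _ ≤ (1-t)^k := by
          apply pow_le_pow_left₀ (mul_nonneg (Real.exp_nonneg _) (by linarith))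
          rw [hs]; exact key_poly h0.le h1
  rw [abs_of_nonneg (sub_nonneg.2 hub)]
  have hr : ((k : ℝ)/2) * (t^2 + t^3) * E = E * ((k : ℝ) * s) := by rw [hs]; ring
  linarith

lemma sum_aux {p : ℝ} (hp : 1 < p) : Summable (fun n : ℕ => 1 / ((n:ℝ)+1)^p) := by
  have h1 := Real.summable_one_div_nat_rpow.mpr hp
  have h2 := (_root_.summable_nat_add_iff 1).mpr h1
  exact h2.congr fun n => by norm_cast

lemma rpow_merge {x : ℝ} (hx : 0 < x) (a b : ℝ) (m : ℕ) :
    (1/x^a)^m * (1/x^b) = 1/x^((m:ℝ)*a+b) := by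
  rw [div_pow, one_pow, div_mul_div_comm, one_mul,
    ← Real.rpow_natCast (x^a) m, ← Real.rpow_mul hx.le, ← Real.rpow_add hx, mul_comm a]
/-- The generalized Riesz function
`R_{ab}(x) = x ∑_{n=1}^∞ (μ(n)/n^b) exp(-x/n^a)`. -/
noncomputable def Rab (a b x : ℝ) : ℝ :=
  x * ∑' n : ℕ,
    ((moebius (n + 1) : ℤ) : ℝ) / ((n : ℝ) + 1) ^ b * Real.exp (-x / ((n : ℝ) + 1) ^ a)

/-- The generalized Báez-Duarte sequence
`c_{ab}(k) = ∑_{n=1}^∞ (μ(n)/n^b)(1 - 1/n^a)^k`. -/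
noncomputable def cab (a b : ℝ) (k : ℕ) : ℝ :=
  ∑' n : ℕ,
    ((moebius (n + 1) : ℤ) : ℝ) / ((n : ℝ) + 1) ^ b * (1 - 1 / ((n : ℝ) + 1) ^ a) ^ k

theorem stmt10 (a b : ℝ) (ha : 0 < a) (hb : 1 < b) (k : ℕ) (hk : 1 ≤ k) :
    |Rab a b k / k - cab a b k| ≤
      ((k : ℝ) / 2) *
          ∑' n : ℕ, 1 / ((n : ℝ) + 1) ^ (2 * a + b) * Real.exp (-(k : ℝ) / ((n : ℝ) + 1) ^ a)
        + ((k : ℝ) / 2) *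
          ∑' n : ℕ, 1 / ((n : ℝ) + 1) ^ (3 * a + b) * Real.exp (-(k : ℝ) / ((n : ℝ) + 1) ^ a) := by
  have hk0 : (k : ℝ) ≠ 0 := Nat.cast_ne_zero.mpr (by omega)
  set f : ℕ → ℝ := fun n =>
    ((moebius (n + 1) : ℤ) : ℝ) / ((n : ℝ) + 1) ^ b *
      Real.exp (-(k : ℝ) / ((n : ℝ) + 1) ^ a) with hf_def
  set g : ℕ → ℝ := fun n =>
    ((moebius (n + 1) : ℤ) : ℝ) / ((n : ℝ) + 1) ^ b *
      (1 - 1 / ((n : ℝ) + 1) ^ a) ^ k with hg_def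
  set h₁ : ℕ → ℝ := fun n =>
    1 / ((n : ℝ) + 1) ^ (2 * a + b) * Real.exp (-(k : ℝ) / ((n : ℝ) + 1) ^ a) with hh1_def
  set h₂ : ℕ → ℝ := fun n =>
    1 / ((n : ℝ) + 1) ^ (3 * a + b) * Real.exp (-(k : ℝ) / ((n : ℝ) + 1) ^ a) with hh2_def
  -- basic facts about each n
  have hNpos : ∀ n : ℕ, (0:ℝ) < (n:ℝ) + 1 := fun n => by positivity
  have hNa : ∀ n : ℕ, (1:ℝ) ≤ ((n:ℝ)+1)^a := fun n =>
    Real.one_le_rpow (by linarith [hNpos n]) ha.le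
  have ht0 : ∀ n : ℕ, (0:ℝ) < 1 / ((n:ℝ)+1)^a := fun n => by
    have := hNa n; positivity
  have ht1 : ∀ n : ℕ, 1 / ((n:ℝ)+1)^a ≤ 1 := fun n => by
    rw [div_le_one (by linarith [hNa n])]; exact hNa n
  have hE1 : ∀ n : ℕ, Real.exp (-(k : ℝ) / ((n : ℝ) + 1) ^ a) ≤ 1 := fun n => by
    rw [Real.exp_le_one_iff, neg_div]
    have : 0 ≤ (k:ℝ) / ((n:ℝ)+1)^a := by positivity
    linarith
  have hE0 : ∀ n : ℕ, 0 ≤ Real.exp (-(k : ℝ) / ((n : ℝ) + 1) ^ a) := fun n =>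
    (Real.exp_pos _).le
  have hmu : ∀ n : ℕ, |((moebius (n + 1) : ℤ) : ℝ)| ≤ 1 := fun n => by
    exact_mod_cast (abs_moebius_le_one (n := n + 1))
  have harg : ∀ n : ℕ,
      -(k : ℝ) / ((n : ℝ) + 1) ^ a = -((k:ℝ) * (1 / ((n:ℝ)+1)^a)) := fun n => by
    rw [mul_one_div, neg_div]
  -- pointwise bound
  have hbound : ∀ n : ℕ, |f n - g n| ≤ ((k:ℝ)/2) * h₁ n + ((k:ℝ)/2) * h₂ n := by
    intro n
    set t := 1 / ((n:ℝ)+1)^a with htdef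
    set E := Real.exp (-(k : ℝ) / ((n : ℝ) + 1) ^ a) with hEdef
    have hEeq : E = Real.exp (-((k:ℝ) * t)) := by rw [hEdef, harg n]
    have hkey : |E - (1 - t)^k| ≤ ((k:ℝ)/2) * (t^2 + t^3) * E := by
      rw [hEeq]; exact key_pt (ht0 n) (ht1 n) k
    have habs : |f n - g n| = |((moebius (n + 1) : ℤ) : ℝ) / ((n : ℝ) + 1) ^ b| *
        |E - (1 - t)^k| := by
      rw [hf_def, hg_def, ← mul_sub, abs_mul]
    have hfrac : |((moebius (n + 1) : ℤ) : ℝ) / ((n : ℝ) + 1) ^ b| ≤ 1 / ((n:ℝ)+1)^b := by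
      rw [abs_div, abs_of_pos (Real.rpow_pos_of_pos (hNpos n) b)]
      gcongr
      exact hmu n
    have e2 := rpow_merge (hNpos n) a b 2
    have e3 := rpow_merge (hNpos n) a b 3
    calc |f n - g n| = |((moebius (n + 1) : ℤ) : ℝ) / ((n : ℝ) + 1) ^ b| *
          |E - (1 - t)^k| := habs
      _ ≤ (1 / ((n:ℝ)+1)^b) * (((k:ℝ)/2) * (t^2 + t^3) * E) := by
          apply mul_le_mul hfrac hkey (abs_nonneg _)
          have := hNa n; positivity
      _ = ((k:ℝ)/2) * ((t^2 * (1/((n:ℝ)+1)^b)) * E) +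
          ((k:ℝ)/2) * ((t^3 * (1/((n:ℝ)+1)^b)) * E) := by ring
      _ = ((k:ℝ)/2) * h₁ n + ((k:ℝ)/2) * h₂ n := by
          rw [htdef, e2, e3, hh1_def, hh2_def]
          norm_num
          rw [hEdef]
  -- summability
  have hsb : Summable (fun n : ℕ => 1 / ((n:ℝ)+1)^b) := sum_aux hb
  have hf : Summable f := by
    apply Summable.of_norm_bounded hsb
    intro n
    rw [hf_def, Real.norm_eq_abs, abs_mul]
    calc |((moebius (n + 1) : ℤ) : ℝ) / ((n : ℝ) + 1) ^ b| *
          |Real.exp (-(k : ℝ) / ((n : ℝ) + 1) ^ a)|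
        ≤ (1 / ((n:ℝ)+1)^b) * 1 := by
          apply mul_le_mul _ _ (abs_nonneg _) (by positivity)
          · rw [abs_div, abs_of_pos (Real.rpow_pos_of_pos (hNpos n) b)]
            gcongr
            exact hmu n
          · rw [abs_of_nonneg (hE0 n)]; exact hE1 n
      _ = 1 / ((n:ℝ)+1)^b := mul_one _
  have hg : Summable g := by
    apply Summable.of_norm_bounded hsb
    intro n
    rw [hg_def, Real.norm_eq_abs, abs_mul]
    calc |((moebius (n + 1) : ℤ) : ℝ) / ((n : ℝ) + 1) ^ b| *
          |(1 - 1 / ((n : ℝ) + 1) ^ a) ^ k|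
        ≤ (1 / ((n:ℝ)+1)^b) * 1 := by
          apply mul_le_mul _ _ (abs_nonneg _) (by positivity)
          · rw [abs_div, abs_of_pos (Real.rpow_pos_of_pos (hNpos n) b)]
            gcongr
            exact hmu n
          · rw [abs_pow]
            apply pow_le_one₀ (abs_nonneg _)
            rw [abs_of_nonneg (by linarith [ht1 n])]
            linarith [ht0 n]
      _ = 1 / ((n:ℝ)+1)^b := mul_one _
  have hs1 : Summable h₁ := by
    apply Summable.of_nonneg_of_le (fun n => by
        rw [hh1_def]
        have := hNpos n
        positivity)
      (fun n => ?_) (sum_aux (p := 2*a+b) (by linarith))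
    rw [hh1_def]
    calc 1 / ((n : ℝ) + 1) ^ (2 * a + b) * Real.exp (-(k : ℝ) / ((n : ℝ) + 1) ^ a)
        ≤ 1 / ((n : ℝ) + 1) ^ (2 * a + b) * 1 := by
          apply mul_le_mul_of_nonneg_left (hE1 n)
          have := hNpos n; positivity
      _ = 1 / ((n : ℝ) + 1) ^ (2 * a + b) := mul_one _
  have hs2 : Summable h₂ := by
    apply Summable.of_nonneg_of_le (fun n => by
        rw [hh2_def]
        have := hNpos n
        positivity)
      (fun n => ?_) (sum_aux (p := 3*a+b) (by linarith))
    rw [hh2_def]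
    calc 1 / ((n : ℝ) + 1) ^ (3 * a + b) * Real.exp (-(k : ℝ) / ((n : ℝ) + 1) ^ a)
        ≤ 1 / ((n : ℝ) + 1) ^ (3 * a + b) * 1 := by
          apply mul_le_mul_of_nonneg_left (hE1 n)
          have := hNpos n; positivity
      _ = 1 / ((n : ℝ) + 1) ^ (3 * a + b) := mul_one _
  -- assemble
  have hR : Rab a b k / k = ∑' n, f n := by
    rw [Rab, mul_div_cancel_left₀ _ hk0]
  have hc : cab a b k = ∑' n, g n := rfl
  rw [hR, hc]
  calc |∑' n, f n - ∑' n, g n| = |∑' n, (f n - g n)| := by rw [Summable.tsum_sub hf hg]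
    _ ≤ ∑' n, |f n - g n| := by
        simpa [Real.norm_eq_abs] using norm_tsum_le_tsum_norm
          (f := fun n => f n - g n) (by simpa [Real.norm_eq_abs] using (hf.sub hg).abs)
    _ ≤ ∑' n, (((k:ℝ)/2) * h₁ n + ((k:ℝ)/2) * h₂ n) :=
        Summable.tsum_le_tsum hbound (hf.sub hg).abs ((hs1.mul_left _).add (hs2.mul_left _))
    _ = ((k:ℝ)/2) * ∑' n, h₁ n + ((k:ℝ)/2) * ∑' n, h₂ n := by
        rw [Summable.tsum_add (hs1.mul_left _) (hs2.mul_left _), tsum_mul_left, tsum_mul_left]
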